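/- arXiv:2108.05411 — 9 statements merged into one kernel-verified Lean document; each statement's English description precedes it below -/
import Mathlib

section
/- Let T : B → A be a λ-weighted relative Rota-Baxter operator. Then the bilinear operation u ·_T v := T(u)·v + u·T(v) + λ u·_B v defines an associative algebra structure on B. -/
/-- if `T` is a λ-weighted relative Rota-Baxter operator then
`u ·_T v := T(u)·v + u·T(v) + λ u·_B v` is an associative product on `B`. -/
theorem weighted_relative_RotaBaxter_induced_product_assoc
    {k A B : Type*} [Field k] [CharZero k]
    [AddCommGroup A] [Module k A] [AddCommGroup B] [Module k B]
    (mA : A →ₗ[k] A →ₗ[k] A) (mB : B →ₗ[k] B →ₗ[k] B)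
    (l : A →ₗ[k] B →ₗ[k] B) (r : B →ₗ[k] A →ₗ[k] B)
    (hA : ∀ a b c, mA (mA a b) c = mA a (mA b c))
    (hB : ∀ u v w, mB (mB u v) w = mB u (mB v w))
    (h1 : ∀ a b u, l (mA a b) u = l a (l b u))
    (h2 : ∀ a u b, r (l a u) b = l a (r u b))
    (h3 : ∀ u a b, r (r u a) b = r u (mA a b))
    (c1 : ∀ a u v, mB (l a u) v = l a (mB u v))
    (c2 : ∀ u a v, mB (r u a) v = mB u (l a v))
    (c3 : ∀ u v a, r (mB u v) a = mB u (r v a))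
    (lam : k) (T : B →ₗ[k] A)
    (hT : ∀ u v : B, mA (T u) (T v) = T (l (T u) v + r u (T v) + lam • mB u v)) :
    ∀ u v w : B,
      (fun (u v : B) => l (T u) v + r u (T v) + lam • mB u v)
        ((fun (u v : B) => l (T u) v + r u (T v) + lam • mB u v) u v) w
      =
      (fun (u v : B) => l (T u) v + r u (T v) + lam • mB u v) u
        ((fun (u v : B) => l (T u) v + r u (T v) + lam • mB u v) v w) := by
  intro u v w
  simp only [map_add, map_smul, LinearMap.add_apply, LinearMap.smul_apply,
    ← hT, h1, h2, h3, c1, c2, c3, hB, smul_add]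
  abel
end

section
/- Let A be a unital associative algebra and r = Σ r_(1) ⊗ r_(2) ∈ A ⊗ A an element satisfying the λ-weighted associative Yang-Baxter equation r₁₃r₁₂ − r₁₂r₂₃ + r₂₃r₁₃ = λ r₁₃. Then the linear map T : A → A defined by T(a) = Σ r_(1)·a·r_(2) is a (−λ)-weighted Rota-Baxter operator on A, i.e., T(a)·T(b) = T(T(a)·b + a·T(b) − λ a·b) for all a,b. -/
open TensorProduct

/-- a solution `r = Σ r₁ᵢ ⊗ r₂ᵢ ∈ A ⊗ A` of the λ-weighted
associative Yang-Baxter equation `r₁₃r₁₂ − r₁₂r₂₃ + r₂₃r₁₃ = λ r₁₃`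
(products in `A ⊗ A ⊗ A`) yields the (−λ)-weighted Rota-Baxter operator
`T(a) = Σ r₁ᵢ · a · r₂ᵢ`. -/
theorem weighted_AYBE_gives_weighted_RotaBaxter
    {k A : Type*} [Field k] [CharZero k] [Ring A] [Algebra k A]
    (lam : k) {ι : Type*} [Fintype ι] (r1 r2 : ι → A)
    (r12 r13 r23 : A ⊗[k] (A ⊗[k] A))
    (hr12 : r12 = ∑ i, (r1 i) ⊗ₜ[k] ((r2 i) ⊗ₜ[k] (1 : A)))
    (hr13 : r13 = ∑ i, (r1 i) ⊗ₜ[k] ((1 : A) ⊗ₜ[k] (r2 i)))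
    (hr23 : r23 = ∑ i, (1 : A) ⊗ₜ[k] ((r1 i) ⊗ₜ[k] (r2 i)))
    (hr : r13 * r12 - r12 * r23 + r23 * r13 = lam • r13) :
    ∀ a b : A,
      (∑ i, r1 i * a * r2 i) * (∑ i, r1 i * b * r2 i)
      = ∑ i, r1 i * ((∑ j, r1 j * a * r2 j) * b + a * (∑ j, r1 j * b * r2 j)
          - lam • (a * b)) * r2 i := by
  classical
  intro a b
  let ψ : A ⊗[k] A →ₗ[k] A :=
    TensorProduct.lift (LinearMap.mk₂ k (fun y z => a * y * b * z)
      (fun y₁ y₂ z => by simp [mul_add, add_mul])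
      (fun c y z => by simp [Algebra.mul_smul_comm, Algebra.smul_mul_assoc])
      (fun y z₁ z₂ => by simp [mul_add])
      (fun c y z => by simp [Algebra.mul_smul_comm]))
  let φ := (LinearMap.mul' k A).comp (TensorProduct.map LinearMap.id ψ)
  have hφ : ∀ x y z : A, φ (x ⊗ₜ[k] (y ⊗ₜ[k] z)) = x * (a * y * b * z) := by
    intro x y z
    simp [φ, ψ]
  subst hr12 hr13 hr23
  rw [Finset.sum_mul_sum, Finset.sum_mul_sum, Finset.sum_mul_sum] at hr
  simp only [Algebra.TensorProduct.tmul_mul_tmul] at hr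
  simp only [one_mul, mul_one] at hr
  have key := congrArg φ hr
  simp only [map_add, map_sub, map_smul, map_sum, hφ, mul_one] at key
  have e2 : (∑ i, r1 i * a * r2 i) * (∑ i, r1 i * b * r2 i)
      = ∑ i, ∑ j, r1 i * (a * (r2 i * r1 j) * b * r2 j) := by
    rw [Finset.sum_mul_sum]
    refine Finset.sum_congr rfl fun i _ => Finset.sum_congr rfl fun j _ => ?_
    noncomm_ring
  have e1 : (∑ i, ∑ j, r1 i * r1 j * (a * r2 j * b * r2 i))
      = ∑ i, r1 i * ((∑ j, r1 j * a * r2 j) * b) * r2 i := by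
    refine Finset.sum_congr rfl fun i _ => ?_
    simp only [Finset.mul_sum, Finset.sum_mul]
    refine Finset.sum_congr rfl fun j _ => ?_
    noncomm_ring
  have e3 : (∑ i, ∑ j, r1 j * (a * r1 i * b * (r2 i * r2 j)))
      = ∑ i, r1 i * (a * (∑ j, r1 j * b * r2 j)) * r2 i := by
    rw [Finset.sum_comm]
    refine Finset.sum_congr rfl fun i _ => ?_
    simp only [Finset.mul_sum, Finset.sum_mul]
    refine Finset.sum_congr rfl fun j _ => ?_
    noncomm_ring
  have eS : (lam • ∑ i, r1 i * (a * b * r2 i))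
      = ∑ i, r1 i * (lam • (a * b)) * r2 i := by
    rw [Finset.smul_sum]
    refine Finset.sum_congr rfl fun i _ => ?_
    simp [mul_smul_comm, smul_mul_assoc, mul_assoc]
  have eR : (∑ i, r1 i * ((∑ j, r1 j * a * r2 j) * b + a * (∑ j, r1 j * b * r2 j)
          - lam • (a * b)) * r2 i)
      = (∑ i, r1 i * ((∑ j, r1 j * a * r2 j) * b) * r2 i)
        + (∑ i, r1 i * (a * (∑ j, r1 j * b * r2 j)) * r2 i)
        - ∑ i, r1 i * (lam • (a * b)) * r2 i := by
    simp [mul_add, add_mul, mul_sub, sub_mul, Finset.sum_add_distrib, Finset.sum_sub_distrib]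
  rw [e2, eR, ← e1, ← e3, ← eS, ← key]
  abel
end

section
/- Let A, B be associative algebras with B an associative A-bimodule, V = A ⊕ B, and λ a scalar. Then [μ_A + l + r, λμ_B]_G = 0 in the graded Lie algebra of multilinear maps on V with the Gerstenhaber bracket, where μ_A, μ_B are the multiplications of A, B viewed as elements of Hom(V^{⊗2},V) and l, r are the left and right A-actions on B viewed as elements of Hom(V^{⊗2},V). -/
/-- on `V = A ⊕ B`, the Gerstenhaber bracket of the degree-two
elements `μ_A + l + r` and `λμ_B` vanishes:
`[f,g]_G = f∘₁g − f∘₂g + g∘₁f − g∘₂f = 0`, where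
`f = μ_A + l + r` and `g = λμ_B`. -/
theorem gerstenhaber_bracket_semidirect_compat
    {k A B : Type*} [Field k] [CharZero k]
    [AddCommGroup A] [Module k A] [AddCommGroup B] [Module k B]
    (mA : A →ₗ[k] A →ₗ[k] A) (mB : B →ₗ[k] B →ₗ[k] B)
    (l : A →ₗ[k] B →ₗ[k] B) (r : B →ₗ[k] A →ₗ[k] B)
    (hA : ∀ a b c, mA (mA a b) c = mA a (mA b c))
    (hB : ∀ u v w, mB (mB u v) w = mB u (mB v w))
    (h1 : ∀ a b u, l (mA a b) u = l a (l b u))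
    (h2 : ∀ a u b, r (l a u) b = l a (r u b))
    (h3 : ∀ u a b, r (r u a) b = r u (mA a b))
    (c1 : ∀ a u v, mB (l a u) v = l a (mB u v))
    (c2 : ∀ u a v, mB (r u a) v = mB u (l a v))
    (c3 : ∀ u v a, r (mB u v) a = mB u (r v a))
    (lam : k) :
    ∀ x y z : A × B,
      (fun (p q : A × B) => ((mA p.1 q.1, l p.1 q.2 + r p.2 q.1) : A × B))
          ((fun (p q : A × B) => (((0 : A), lam • mB p.2 q.2) : A × B)) x y) z
        - (fun (p q : A × B) => ((mA p.1 q.1, l p.1 q.2 + r p.2 q.1) : A × B)) x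
          ((fun (p q : A × B) => (((0 : A), lam • mB p.2 q.2) : A × B)) y z)
        + ((fun (p q : A × B) => (((0 : A), lam • mB p.2 q.2) : A × B))
            ((fun (p q : A × B) => ((mA p.1 q.1, l p.1 q.2 + r p.2 q.1) : A × B)) x y) z
          - (fun (p q : A × B) => (((0 : A), lam • mB p.2 q.2) : A × B)) x
            ((fun (p q : A × B) => ((mA p.1 q.1, l p.1 q.2 + r p.2 q.1) : A × B)) y z))
      = 0 := by
  intro x y z
  simp only [Prod.ext_iff, Prod.fst_add, Prod.snd_add, Prod.fst_sub, Prod.snd_sub,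
    Prod.fst_zero, Prod.snd_zero, map_zero, LinearMap.zero_apply, map_smul,
    LinearMap.smul_apply, map_add, LinearMap.add_apply]
  constructor
  · simp
  · simp only [c1, c2, c3, smul_add]
    abel
end

section
/- Let T : B → A be a λ-weighted relative Rota-Baxter operator. Then A becomes a bimodule over the induced associative algebra (B, ·_T) with left action l^T_u(a) = T(u)·_A a − T(u·a) and right action r^T_u(a) = a·_A T(u) − T(a·u); i.e., l^T_{u·_T v} = l^T_u ∘ l^T_v, r^T_{u·_T v} = r^T_v ∘ r^T_u, and r^T_v ∘ l^T_u = l^T_u ∘ r^T_v for all u,v ∈ B. -/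
/-- for a λ-weighted relative Rota-Baxter operator `T : B → A`,
the maps `l^T_u(a) = T(u)·a − T(u·a)` and `r^T_u(a) = a·T(u) − T(a·u)` make `A`
a bimodule over the induced algebra `(B, ·_T)`. -/
theorem weighted_relative_RotaBaxter_induced_bimodule
    {k A B : Type*} [Field k] [CharZero k]
    [AddCommGroup A] [Module k A] [AddCommGroup B] [Module k B]
    (mA : A →ₗ[k] A →ₗ[k] A) (mB : B →ₗ[k] B →ₗ[k] B)
    (l : A →ₗ[k] B →ₗ[k] B) (r : B →ₗ[k] A →ₗ[k] B)
    (hA : ∀ a b c, mA (mA a b) c = mA a (mA b c))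
    (hB : ∀ u v w, mB (mB u v) w = mB u (mB v w))
    (h1 : ∀ a b u, l (mA a b) u = l a (l b u))
    (h2 : ∀ a u b, r (l a u) b = l a (r u b))
    (h3 : ∀ u a b, r (r u a) b = r u (mA a b))
    (c1 : ∀ a u v, mB (l a u) v = l a (mB u v))
    (c2 : ∀ u a v, mB (r u a) v = mB u (l a v))
    (c3 : ∀ u v a, r (mB u v) a = mB u (r v a))
    (lam : k) (T : B →ₗ[k] A)
    (hT : ∀ u v : B, mA (T u) (T v) = T (l (T u) v + r u (T v) + lam • mB u v)) :
    (∀ (u v : B) (a : A),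
      (fun (u : B) (a : A) => mA (T u) a - T (r u a))
        (l (T u) v + r u (T v) + lam • mB u v) a
      = (fun (u : B) (a : A) => mA (T u) a - T (r u a)) u
          ((fun (u : B) (a : A) => mA (T u) a - T (r u a)) v a))
    ∧
    (∀ (u v : B) (a : A),
      (fun (u : B) (a : A) => mA a (T u) - T (l a u))
        (l (T u) v + r u (T v) + lam • mB u v) a
      = (fun (u : B) (a : A) => mA a (T u) - T (l a u)) v
          ((fun (u : B) (a : A) => mA a (T u) - T (l a u)) u a))
    ∧
    (∀ (u v : B) (a : A),
      (fun (u : B) (a : A) => mA a (T u) - T (l a u)) v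
        ((fun (u : B) (a : A) => mA (T u) a - T (r u a)) u a)
      = (fun (u : B) (a : A) => mA (T u) a - T (r u a)) u
          ((fun (u : B) (a : A) => mA a (T u) - T (l a u)) v a)) := by

  refine ⟨fun u v a => ?_, fun u v a => ?_, fun u v a => ?_⟩ <;>
  · simp only [map_add, map_smul, LinearMap.add_apply, LinearMap.smul_apply,
      LinearMap.sub_apply, map_sub, h2, h3, c3, c1, c2, h1, ← hT, hA]
    simp only [hT, map_add, map_smul, h1, h2, h3, c1, c2, c3]
    abel
end

section
/- Let T : B → A be a λ-weighted relative Rota-Baxter operator and T_t = T + tT₁ a linear deformation of T (i.e., T + tT₁ is a λ-weighted relative Rota-Baxter operator for all values of t). Then T₁ satisfies T(u)·_A T₁(v) + T₁(u)·_A T(v) = T(T₁(u)·v + u·T₁(v)) + T₁(T(u)·v + u·T(v) + λ u·_B v) for all u,v (i.e., T₁ is a 1-cocycle: d_T(T₁) = 0), and moreover T₁ is a relative Rota-Baxter operator of weight 0: T₁(u)·_A T₁(v) = T₁(T₁(u)·v + u·T₁(v)). -/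
/-- if `T_t = T + tT₁` is a λ-weighted relative Rota-Baxter
operator for all values of `t`, then `T₁` is a 1-cocycle for `T`
(the linearized equation holds) and `T₁` is itself a relative Rota-Baxter
operator of weight 0. -/
theorem linear_deformation_cocycle_and_weight_zero
    {k A B : Type*} [Field k] [CharZero k]
    [AddCommGroup A] [Module k A] [AddCommGroup B] [Module k B]
    (mA : A →ₗ[k] A →ₗ[k] A) (mB : B →ₗ[k] B →ₗ[k] B)
    (l : A →ₗ[k] B →ₗ[k] B) (r : B →ₗ[k] A →ₗ[k] B)
    (hA : ∀ a b c, mA (mA a b) c = mA a (mA b c))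
    (hB : ∀ u v w, mB (mB u v) w = mB u (mB v w))
    (h1 : ∀ a b u, l (mA a b) u = l a (l b u))
    (h2 : ∀ a u b, r (l a u) b = l a (r u b))
    (h3 : ∀ u a b, r (r u a) b = r u (mA a b))
    (c1 : ∀ a u v, mB (l a u) v = l a (mB u v))
    (c2 : ∀ u a v, mB (r u a) v = mB u (l a v))
    (c3 : ∀ u v a, r (mB u v) a = mB u (r v a))
    (lam : k) (T T1 : B →ₗ[k] A)
    (hdef : ∀ t : k, ∀ u v : B,
      mA ((T + t • T1) u) ((T + t • T1) v)
      = (T + t • T1) (l ((T + t • T1) u) v + r u ((T + t • T1) v) + lam • mB u v)) :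
    (∀ u v : B,
      mA (T u) (T1 v) + mA (T1 u) (T v)
      = T (l (T1 u) v + r u (T1 v))
        + T1 (l (T u) v + r u (T v) + lam • mB u v))
    ∧
    (∀ u v : B, mA (T1 u) (T1 v) = T1 (l (T1 u) v + r u (T1 v))) := by
  constructor <;> intro u v <;>
  · have e0 := hdef 0 u v
    have e1 := hdef 1 u v
    have em := hdef (-1) u v
    simp only [LinearMap.add_apply, LinearMap.smul_apply, zero_smul, add_zero, one_smul,
      neg_smul, neg_neg, map_add, map_smul, map_neg, LinearMap.map_add, LinearMap.add_apply,
      LinearMap.neg_apply, map_neg] at e0 e1 em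
    simp only [map_add, map_smul]
    first
    | linear_combination (norm := module) ((2:k)⁻¹) • e1 - ((2:k)⁻¹) • em
    | linear_combination (norm := module) ((2:k)⁻¹) • e1 + ((2:k)⁻¹) • em - e0
end

section
/- Let T_t = Σ_{i=0}^N tⁱTᵢ be an order N deformation of a λ-weighted relative Rota-Baxter operator T (so T₀ = T and the equations d_T(T_n) = −½ Σ_{i+j=n, i,j≥1} ⟦Tᵢ, Tⱼ⟧ hold for n = 0,…,N). Then the 2-cochain Ob_{T_t} := −½ Σ_{i+j=N+1, i,j≥1} ⟦Tᵢ, Tⱼ⟧ is a 2-cocycle: d_T(Ob_{T_t}) = 0. -/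
section

variable {k A B : Type*} [Field k] [CharZero k]
  [AddCommGroup A] [Module k A] [AddCommGroup B] [Module k B]

/-- The degree-(1,1) derived (graded Lie) bracket `⟦P,Q⟧` on `⊕ₙ Hom(B^{⊗n},A)`. -/
def rbBracket11 (mA : A →ₗ[k] A →ₗ[k] A)
    (l : A →ₗ[k] B →ₗ[k] B) (r : B →ₗ[k] A →ₗ[k] B)
    (P Q : B →ₗ[k] A) : B → B → A :=
  fun u v =>
    P (l (Q u) v) + P (r u (Q v)) + Q (l (P u) v) + Q (r u (P v))
      - mA (P u) (Q v) - mA (Q u) (P v)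

/-- The twisted differential `d_T = d + ⟦T,−⟧` on degree-1 cochains `g : B → A`. -/
def rbDT1 (mA : A →ₗ[k] A →ₗ[k] A) (mB : B →ₗ[k] B →ₗ[k] B)
    (l : A →ₗ[k] B →ₗ[k] B) (r : B →ₗ[k] A →ₗ[k] B)
    (lam : k) (T g : B →ₗ[k] A) : B → B → A :=
  fun u v =>
    T (l (g u) v) + T (r u (g v))
      + g (l (T u) v + r u (T v) + lam • mB u v)
      - mA (T u) (g v) - mA (g u) (T v)

/-- The twisted differential `d_T = d + ⟦T,−⟧` on degree-2 cochains `F : B × B → A`. -/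
def rbDT2 (mA : A →ₗ[k] A →ₗ[k] A) (mB : B →ₗ[k] B →ₗ[k] B)
    (l : A →ₗ[k] B →ₗ[k] B) (r : B →ₗ[k] A →ₗ[k] B)
    (lam : k) (T : B →ₗ[k] A) (F : B → B → A) : B → B → B → A :=
  fun u v w =>
    T (l (F u v) w) - T (r u (F v w))
      - F (l (T u) v + r u (T v) + lam • mB u v) w
      + F u (l (T v) w + r v (T w) + lam • mB v w)
      + mA (T u) (F v w) - mA (F u v) (T w)

/-- Auxiliary: the degree-(2,1) derived bracket of a 2-cochain with a 1-cochain. -/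
def rbBr21 (mA : A →ₗ[k] A →ₗ[k] A)
    (l : A →ₗ[k] B →ₗ[k] B) (r : B →ₗ[k] A →ₗ[k] B)
    (F : B → B → A) (R : B →ₗ[k] A) : B → B → B → A :=
  fun u v w =>
    mA (R u) (F v w) - F (l (R u) v) w - F (r u (R v)) w
      + F u (l (R v) w) + F u (r v (R w)) - mA (F u v) (R w)
      + R (l (F u v) w) - R (r u (F v w))

set_option maxHeartbeats 4000000 in
/-- Derivation property: `d_T⟦P,Q⟧ = −⟦d_T P, Q⟧ − ⟦d_T Q, P⟧`. -/
theorem rb_deriv (mA : A →ₗ[k] A →ₗ[k] A) (mB : B →ₗ[k] B →ₗ[k] B)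
    (l : A →ₗ[k] B →ₗ[k] B) (r : B →ₗ[k] A →ₗ[k] B)
    (hA : ∀ a b c, mA (mA a b) c = mA a (mA b c))
    (hB : ∀ u v w, mB (mB u v) w = mB u (mB v w))
    (h1 : ∀ a b u, l (mA a b) u = l a (l b u))
    (h2 : ∀ a u b, r (l a u) b = l a (r u b))
    (h3 : ∀ u a b, r (r u a) b = r u (mA a b))
    (c1 : ∀ a u v, mB (l a u) v = l a (mB u v))
    (c2 : ∀ u a v, mB (r u a) v = mB u (l a v))
    (c3 : ∀ u v a, r (mB u v) a = mB u (r v a))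
    (lam : k) (T P Q : B →ₗ[k] A) (u v w : B) :
    rbDT2 mA mB l r lam T (rbBracket11 mA l r P Q) u v w
    = - rbBr21 mA l r (rbDT1 mA mB l r lam T P) Q u v w
      - rbBr21 mA l r (rbDT1 mA mB l r lam T Q) P u v w := by
  simp only [rbDT2, rbBracket11, rbDT1, rbBr21, map_add, map_sub, map_smul, map_neg,
    LinearMap.add_apply, LinearMap.sub_apply, LinearMap.smul_apply, LinearMap.neg_apply,
    smul_add, smul_sub, hA, hB, h1, h2, h3, c1, c2, c3]
  module

set_option maxHeartbeats 4000000 in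
/-- Graded Jacobi identity for the derived brackets. -/
theorem rb_jacobi (mA : A →ₗ[k] A →ₗ[k] A)
    (l : A →ₗ[k] B →ₗ[k] B) (r : B →ₗ[k] A →ₗ[k] B)
    (hA : ∀ a b c, mA (mA a b) c = mA a (mA b c))
    (h1 : ∀ a b u, l (mA a b) u = l a (l b u))
    (h2 : ∀ a u b, r (l a u) b = l a (r u b))
    (h3 : ∀ u a b, r (r u a) b = r u (mA a b))
    (P Q R : B →ₗ[k] A) (u v w : B) :
    rbBr21 mA l r (rbBracket11 mA l r P Q) R u v w
    + rbBr21 mA l r (rbBracket11 mA l r Q R) P u v w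
    + rbBr21 mA l r (rbBracket11 mA l r R P) Q u v w = 0 := by
  simp only [rbBracket11, rbBr21, map_add, map_sub, map_smul, map_neg,
    LinearMap.add_apply, LinearMap.sub_apply, LinearMap.smul_apply, LinearMap.neg_apply,
    hA, h1, h2, h3]
  abel

/-- Pointwise linearity of `rbDT2` in the 2-cochain slot. -/
theorem rbDT2_neg_smul_sum (mA : A →ₗ[k] A →ₗ[k] A) (mB : B →ₗ[k] B →ₗ[k] B)
    (l : A →ₗ[k] B →ₗ[k] B) (r : B →ₗ[k] A →ₗ[k] B)
    (lam : k) (T : B →ₗ[k] A) (c : k) (s : Finset ℕ) (G : ℕ → B → B → A)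
    (u v w : B) :
    rbDT2 mA mB l r lam T (fun x y => -(c • ∑ i ∈ s, G i x y)) u v w
    = -(c • ∑ i ∈ s, rbDT2 mA mB l r lam T (G i) u v w) := by
  simp only [rbDT2, map_neg, map_smul, map_sum, LinearMap.neg_apply, LinearMap.smul_apply,
    LinearMap.sum_apply, Finset.smul_sum, Finset.sum_add_distrib, Finset.sum_sub_distrib,
    smul_add, smul_sub, neg_add, neg_sub, neg_neg, smul_neg]
  abel

/-- Pointwise linearity of `rbBr21` in the 2-cochain slot. -/
theorem rbBr21_neg_smul_sum (mA : A →ₗ[k] A →ₗ[k] A)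
    (l : A →ₗ[k] B →ₗ[k] B) (r : B →ₗ[k] A →ₗ[k] B)
    (c : k) (s : Finset ℕ) (G : ℕ → B → B → A) (R : B →ₗ[k] A) (u v w : B) :
    rbBr21 mA l r (fun x y => -(c • ∑ i ∈ s, G i x y)) R u v w
    = -(c • ∑ i ∈ s, rbBr21 mA l r (G i) R u v w) := by
  simp only [rbBr21, map_neg, map_smul, map_sum, LinearMap.neg_apply, LinearMap.smul_apply,
    LinearMap.sum_apply, Finset.smul_sum, Finset.sum_add_distrib, Finset.sum_sub_distrib,
    smul_add, smul_sub, neg_add, neg_sub, neg_neg, smul_neg]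
  abel

/-- for an order-`N` deformation `T_t = Σ tⁱ Tᵢ` of a λ-weighted
relative Rota-Baxter operator `T = T₀`, the obstruction 2-cochain
`Ob = −½ Σ_{i+j=N+1, i,j≥1} ⟦Tᵢ,Tⱼ⟧` is a 2-cocycle: `d_T(Ob) = 0`. -/
theorem obstruction_is_two_cocycle
    (mA : A →ₗ[k] A →ₗ[k] A) (mB : B →ₗ[k] B →ₗ[k] B)
    (l : A →ₗ[k] B →ₗ[k] B) (r : B →ₗ[k] A →ₗ[k] B)
    (hA : ∀ a b c, mA (mA a b) c = mA a (mA b c))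
    (hB : ∀ u v w, mB (mB u v) w = mB u (mB v w))
    (h1 : ∀ a b u, l (mA a b) u = l a (l b u))
    (h2 : ∀ a u b, r (l a u) b = l a (r u b))
    (h3 : ∀ u a b, r (r u a) b = r u (mA a b))
    (c1 : ∀ a u v, mB (l a u) v = l a (mB u v))
    (c2 : ∀ u a v, mB (r u a) v = mB u (l a v))
    (c3 : ∀ u v a, r (mB u v) a = mB u (r v a))
    (lam : k) (N : ℕ) (Ts : ℕ → (B →ₗ[k] A))
    (hT : ∀ u v : B,
      mA (Ts 0 u) (Ts 0 v)
      = Ts 0 (l (Ts 0 u) v + r u (Ts 0 v) + lam • mB u v))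
    (hdef : ∀ n, 1 ≤ n → n ≤ N → ∀ u v : B,
      rbDT1 mA mB l r lam (Ts 0) (Ts n) u v
      = -((2:k)⁻¹ •
          ∑ i ∈ Finset.Ioo 0 n, rbBracket11 mA l r (Ts i) (Ts (n - i)) u v)) :
    ∀ u v w : B,
      rbDT2 mA mB l r lam (Ts 0)
        (fun u v =>
          -((2:k)⁻¹ •
            ∑ i ∈ Finset.Ioo 0 (N + 1),
              rbBracket11 mA l r (Ts i) (Ts (N + 1 - i)) u v))
        u v w = 0 := by
  intro u v w
  -- the triple-bracket values
  set val : ℕ → ℕ → ℕ → A := fun a b c =>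
    rbBr21 mA l r (rbBracket11 mA l r (Ts a) (Ts b)) (Ts c) u v w with hval
  -- index set for triple sums
  set D : Finset ((_ : ℕ) × ℕ) := (Finset.Ioo 0 (N + 1)).sigma (fun i => Finset.Ioo 0 i) with hD
  have memD : ∀ x : (_ : ℕ) × ℕ, x ∈ D ↔ (0 < x.1 ∧ x.1 < N + 1 ∧ 0 < x.2 ∧ x.2 < x.1) := by
    intro x
    simp [hD, Finset.mem_sigma, Finset.mem_Ioo, and_assoc]
  -- S1 and its permuted versions
  have hS12 : ∑ x ∈ D, val x.2 (x.1 - x.2) (N + 1 - x.1)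
      = ∑ x ∈ D, val (x.1 - x.2) (N + 1 - x.1) x.2 := by
    refine Finset.sum_nbij' (fun x => ⟨N + 1 - x.1 + x.2, N + 1 - x.1⟩)
      (fun x => ⟨N + 1 - x.2, x.1 - x.2⟩) ?_ ?_ ?_ ?_ ?_
    · intro x hx
      rw [memD] at hx ⊢
      dsimp only
      omega
    · intro x hx
      rw [memD] at hx ⊢
      dsimp only
      omega
    · intro x hx
      rw [memD] at hx
      ext <;> simp <;> omega
    · intro x hx
      rw [memD] at hx
      ext <;> simp <;> omega
    · intro x hx
      rw [memD] at hx
      have e1 : N + 1 - x.1 + x.2 - (N + 1 - x.1) = x.2 := by omega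
      have e2 : N + 1 - (N + 1 - x.1 + x.2) = x.1 - x.2 := by omega
      simp only [e1, e2]
  have hS13 : ∑ x ∈ D, val x.2 (x.1 - x.2) (N + 1 - x.1)
      = ∑ x ∈ D, val (N + 1 - x.1) x.2 (x.1 - x.2) := by
    refine Finset.sum_nbij' (fun x => ⟨N + 1 - x.2, x.1 - x.2⟩)
      (fun x => ⟨N + 1 - x.1 + x.2, N + 1 - x.1⟩) ?_ ?_ ?_ ?_ ?_
    · intro x hx
      rw [memD] at hx ⊢
      dsimp only
      omega
    · intro x hx
      rw [memD] at hx ⊢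
      dsimp only
      omega
    · intro x hx
      rw [memD] at hx
      ext <;> simp <;> omega
    · intro x hx
      rw [memD] at hx
      ext <;> simp <;> omega
    · intro x hx
      rw [memD] at hx
      have e1 : N + 1 - (N + 1 - x.2) = x.2 := by omega
      have e2 : N + 1 - x.2 - (x.1 - x.2) = N + 1 - x.1 := by omega
      simp only [e1, e2]
  -- Jacobi: the symmetrized triple sum vanishes
  have hJ : ∀ x ∈ D, val x.2 (x.1 - x.2) (N + 1 - x.1) + val (x.1 - x.2) (N + 1 - x.1) x.2
      + val (N + 1 - x.1) x.2 (x.1 - x.2) = 0 := by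
    intro x _
    exact rb_jacobi mA l r hA h1 h2 h3 (Ts x.2) (Ts (x.1 - x.2)) (Ts (N + 1 - x.1)) u v w
  have hS1 : ∑ x ∈ D, val x.2 (x.1 - x.2) (N + 1 - x.1) = 0 := by
    have h3S : (3 : k) • ∑ x ∈ D, val x.2 (x.1 - x.2) (N + 1 - x.1) = 0 := by
      have : (3 : k) = 1 + 1 + 1 := by norm_num
      rw [this, add_smul, add_smul, one_smul]
      nth_rewrite 2 [hS12]
      nth_rewrite 2 [hS13]
      rw [← Finset.sum_add_distrib, ← Finset.sum_add_distrib]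
      exact Finset.sum_eq_zero hJ
    have := congrArg (fun z => (3 : k)⁻¹ • z) h3S
    simpa [inv_smul_smul₀ (by norm_num : (3:k) ≠ 0)] using this
  -- per-index computation using the derivation property and the deformation equations
  have hterm : ∀ i ∈ Finset.Ioo 0 (N + 1),
      rbDT2 mA mB l r lam (Ts 0) (rbBracket11 mA l r (Ts i) (Ts (N + 1 - i))) u v w
      = (2:k)⁻¹ • (∑ a ∈ Finset.Ioo 0 i, val a (i - a) (N + 1 - i))
        + (2:k)⁻¹ • (∑ a ∈ Finset.Ioo 0 (N + 1 - i), val a (N + 1 - i - a) i) := by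
    intro i hi
    rw [Finset.mem_Ioo] at hi
    have hfi : rbDT1 mA mB l r lam (Ts 0) (Ts i)
        = fun x y => -((2:k)⁻¹ •
            ∑ a ∈ Finset.Ioo 0 i, rbBracket11 mA l r (Ts a) (Ts (i - a)) x y) :=
      funext fun x => funext fun y => hdef i (by omega) (by omega) x y
    have hfmi : rbDT1 mA mB l r lam (Ts 0) (Ts (N + 1 - i))
        = fun x y => -((2:k)⁻¹ •
            ∑ a ∈ Finset.Ioo 0 (N + 1 - i), rbBracket11 mA l r (Ts a) (Ts (N + 1 - i - a)) x y) :=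
      funext fun x => funext fun y => hdef (N + 1 - i) (by omega) (by omega) x y
    rw [rb_deriv mA mB l r hA hB h1 h2 h3 c1 c2 c3 lam (Ts 0) (Ts i) (Ts (N + 1 - i)) u v w,
      hfi, hfmi, rbBr21_neg_smul_sum, rbBr21_neg_smul_sum]
    simp only [hval]
    abel
  -- reflect the second double sum
  have hrefl : ∑ i ∈ Finset.Ioo 0 (N + 1), ∑ a ∈ Finset.Ioo 0 (N + 1 - i), val a (N + 1 - i - a) i
      = ∑ i ∈ Finset.Ioo 0 (N + 1), ∑ a ∈ Finset.Ioo 0 i, val a (i - a) (N + 1 - i) := by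
    refine Finset.sum_nbij' (fun i => N + 1 - i) (fun i => N + 1 - i) ?_ ?_ ?_ ?_ ?_
    · intro i hi
      rw [Finset.mem_Ioo] at hi ⊢
      omega
    · intro i hi
      rw [Finset.mem_Ioo] at hi ⊢
      omega
    · intro i hi
      rw [Finset.mem_Ioo] at hi
      omega
    · intro i hi
      rw [Finset.mem_Ioo] at hi
      omega
    · intro i hi
      rw [Finset.mem_Ioo] at hi
      have e1 : N + 1 - (N + 1 - i) = i := by omega
      simp only [e1]
  -- assemble
  rw [rbDT2_neg_smul_sum mA mB l r lam (Ts 0) ((2:k)⁻¹) (Finset.Ioo 0 (N + 1))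
    (fun i => rbBracket11 mA l r (Ts i) (Ts (N + 1 - i))) u v w,
    Finset.sum_congr rfl hterm, Finset.sum_add_distrib,
    ← Finset.smul_sum, ← Finset.smul_sum, hrefl, Finset.sum_sigma' (Finset.Ioo 0 (N + 1))
      (fun i => Finset.Ioo 0 i) (fun i a => val a (i - a) (N + 1 - i)), ← hD, hS1]
  simp

end
end

section
/- Let T : h → g be a λ-weighted relative Rota-Baxter operator on Lie algebras. Then [u,v]_T := ρ(Tu)v − ρ(Tv)u + λ[u,v]_h defines a Lie algebra structure on h. -/
set_option maxRecDepth 2000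

/-- for a λ-weighted relative Rota-Baxter operator `T : h → g` on
Lie algebras, `[u,v]_T := ρ(Tu)v − ρ(Tv)u + λ[u,v]_h` is a Lie bracket on `h`
(alternating and satisfying the Leibniz/Jacobi identity). -/
theorem lie_weighted_relative_RotaBaxter_induced_bracket
    {k g h : Type*} [Field k] [CharZero k]
    [LieRing g] [LieAlgebra k g] [LieRing h] [LieAlgebra k h]
    (ρ : g →ₗ⁅k⁆ LieDerivation k h h) (lam : k) (T : h →ₗ[k] g)
    (hT : ∀ u v : h, ⁅T u, T v⁆ = T (ρ (T u) v - ρ (T v) u + lam • ⁅u, v⁆)) :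
    (∀ u : h,
      (fun (u v : h) => ρ (T u) v - ρ (T v) u + lam • ⁅u, v⁆) u u = 0)
    ∧
    (∀ u v w : h,
      (fun (u v : h) => ρ (T u) v - ρ (T v) u + lam • ⁅u, v⁆) u
        ((fun (u v : h) => ρ (T u) v - ρ (T v) u + lam • ⁅u, v⁆) v w)
      =
      (fun (u v : h) => ρ (T u) v - ρ (T v) u + lam • ⁅u, v⁆)
        ((fun (u v : h) => ρ (T u) v - ρ (T v) u + lam • ⁅u, v⁆) u v) w
      +
      (fun (u v : h) => ρ (T u) v - ρ (T v) u + lam • ⁅u, v⁆) v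
        ((fun (u v : h) => ρ (T u) v - ρ (T v) u + lam • ⁅u, v⁆) u w)) := by
  constructor
  · intro u; simp
  · intro u v w
    have hD : ∀ x y z : h,
        ρ (T (ρ (T x) y - ρ (T y) x + lam • ⁅x, y⁆)) z
          = ρ (T x) (ρ (T y) z) - ρ (T y) (ρ (T x) z) := by
      intro x y z
      rw [← hT, LieHom.map_lie, LieDerivation.commutator_apply]
    beta_reduce
    rw [hD u v w, hD u w, hD v w]
    simp only [map_add, map_sub, map_smul, LieDerivation.apply_lie_eq_add, lie_add, lie_sub, lie_smul, add_lie, sub_lie, smul_lie]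
    rw [leibniz_lie u v w, ← lie_skew ((ρ (T w)) u) v]
    simp only [smul_add, smul_sub, smul_neg, smul_smul]
    abel
end

section
/- Let T : h → g be a λ-weighted relative Rota-Baxter operator on Lie algebras. Then the map ρ^T : h → End(g) defined by ρ^T(u)(x) = T(ρ(x)u) + [Tu, x]_g is a representation of the Lie algebra (h, [,]_T) on g, i.e., ρ^T([u,v]_T) = ρ^T(u)∘ρ^T(v) − ρ^T(v)∘ρ^T(u) for all u,v ∈ h. -/
/-- for a λ-weighted relative Rota-Baxter operator `T : h → g` on
Lie algebras, `ρ^T(u)(x) = T(ρ(x)u) + [Tu,x]` defines a representation of the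
induced Lie algebra `(h, [,]_T)` on `g`:
`ρ^T([u,v]_T) = ρ^T(u)∘ρ^T(v) − ρ^T(v)∘ρ^T(u)`. -/
theorem lie_weighted_relative_RotaBaxter_induced_representation
    {k g h : Type*} [Field k] [CharZero k]
    [LieRing g] [LieAlgebra k g] [LieRing h] [LieAlgebra k h]
    (ρ : g →ₗ⁅k⁆ LieDerivation k h h) (lam : k) (T : h →ₗ[k] g)
    (hT : ∀ u v : h, ⁅T u, T v⁆ = T (ρ (T u) v - ρ (T v) u + lam • ⁅u, v⁆)) :
    ∀ (u v : h) (x : g),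
      (fun (u : h) (x : g) => T (ρ x u) + ⁅T u, x⁆)
        (ρ (T u) v - ρ (T v) u + lam • ⁅u, v⁆) x
      =
      (fun (u : h) (x : g) => T (ρ x u) + ⁅T u, x⁆) u
        ((fun (u : h) (x : g) => T (ρ x u) + ⁅T u, x⁆) v x)
      -
      (fun (u : h) (x : g) => T (ρ x u) + ⁅T u, x⁆) v
        ((fun (u : h) (x : g) => T (ρ x u) + ⁅T u, x⁆) u x) := by
  intro u v x
  simp only
  rw [← hT u v]
  simp only [map_add, map_sub, map_smul, lie_add, lie_sub, lie_smul,
    hT u (ρ x v), hT v (ρ x u), LieDerivation.add_apply]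
  have h1 : ρ ⁅T u, x⁆ v = (ρ (T u)) (ρ x v) - (ρ x) (ρ (T u) v) := by
    rw [LieHom.map_lie]; exact LieDerivation.lie_apply _ _ _
  have h2 : ρ ⁅T v, x⁆ u = (ρ (T v)) (ρ x u) - (ρ x) (ρ (T v) u) := by
    rw [LieHom.map_lie]; exact LieDerivation.lie_apply _ _ _
  have h3 : (ρ x) ⁅u, v⁆ = ⁅u, (ρ x) v⁆ + ⁅(ρ x) u, v⁆ :=
    LieDerivation.apply_lie_eq_add _ _ _
  have h4 : ⁅⁅T u, T v⁆, x⁆ = ⁅T u, ⁅T v, x⁆⁆ - ⁅T v, ⁅T u, x⁆⁆ := by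
    rw [lie_lie]
  rw [h1, h2, h3, h4, ← lie_skew ((ρ x) u) v]
  simp only [map_add, map_sub, map_smul, map_neg]
  module
end

section
/- Let A and B be associative algebras with B an associative A-bimodule, and let T : B → A be a λ-weighted relative Rota-Baxter operator (associative sense). Then T is also a λ-weighted relative Rota-Baxter operator in the Lie sense: [T(u),T(v)]_{A_c} = T(ρ(Tu)v − ρ(Tv)u + λ[u,v]_{B_c}), where A_c, B_c are the commutator Lie algebras and ρ(a)(u) = a·u − u·a. -/
/-- an associative λ-weighted relative Rota-Baxter operator
`T : B → A` is also a λ-weighted relative Rota-Baxter operator for the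
commutator Lie algebras `A_c`, `B_c` and the action `ρ(a)(u) = a·u − u·a`:
`[Tu,Tv]_c = T(ρ(Tu)v − ρ(Tv)u + λ[u,v]_c)`. -/
theorem associative_weighted_RotaBaxter_is_lie_weighted_RotaBaxter
    {k A B : Type*} [Field k] [CharZero k]
    [AddCommGroup A] [Module k A] [AddCommGroup B] [Module k B]
    (mA : A →ₗ[k] A →ₗ[k] A) (mB : B →ₗ[k] B →ₗ[k] B)
    (l : A →ₗ[k] B →ₗ[k] B) (r : B →ₗ[k] A →ₗ[k] B)
    (hA : ∀ a b c, mA (mA a b) c = mA a (mA b c))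
    (hB : ∀ u v w, mB (mB u v) w = mB u (mB v w))
    (h1 : ∀ a b u, l (mA a b) u = l a (l b u))
    (h2 : ∀ a u b, r (l a u) b = l a (r u b))
    (h3 : ∀ u a b, r (r u a) b = r u (mA a b))
    (c1 : ∀ a u v, mB (l a u) v = l a (mB u v))
    (c2 : ∀ u a v, mB (r u a) v = mB u (l a v))
    (c3 : ∀ u v a, r (mB u v) a = mB u (r v a))
    (lam : k) (T : B →ₗ[k] A)
    (hT : ∀ u v : B, mA (T u) (T v) = T (l (T u) v + r u (T v) + lam • mB u v)) :
    ∀ u v : B,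
      mA (T u) (T v) - mA (T v) (T u)
      = T ((l (T u) v - r v (T u)) - (l (T v) u - r u (T v))
            + lam • (mB u v - mB v u)) := by
  intro u v
  rw [hT u v, hT v u]
  simp only [map_add, map_sub, map_smul, smul_sub]
  abel
end
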